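/- Define the contribution multiplicity c(D) of a Dyck path D to be Σ_{s ∈ S(D)} sgn(s), where S(D) is the set of concatenations of elementary paths L_{A_{i+1}×A_i} and L_{A_i×A_{i+1}} realizing D, and sgn(s) = (−1)^{Σ_{i odd}(c_i⁰(s)+c_i¹(s))}. If D = π(D₁D₂) is a concatenation of Dyck paths D₁, D₂ at a 21-corner, then c(D) = c(D₁)·c(D₂). -/

import Mathlib

open List

/-- The sequence `A 0 = 0`, `A 1 = 1`, `A (n+2) = a * A (n+1) - A n + 1` (for `a ≥ 3`
this agrees with the integer recurrence; subtraction does not truncate). -/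
def AN (a : ℕ) : ℕ → ℕ
  | 0 => 0
  | 1 => 1
  | n + 2 => a * AN a (n + 1) + 1 - AN a n

/-- Elementary path `L_{u×v}`: `u` east steps (`false`) followed by `v` north steps (`true`). -/
def L (u v : ℕ) : List Bool := List.replicate u false ++ List.replicate v true

def east (w : List Bool) : ℕ := w.count false
def north (w : List Bool) : ℕ := w.count true

/-- A word is a Dyck path (of its own size): it never goes above the diagonal. -/
def IsDyckWord (w : List Bool) : Prop :=
  ∀ p : List Bool, p <+: w → east w * north p ≤ north w * east p

/-- A Dyck path of size `r × s`. -/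
def IsDyckSize (r s : ℕ) (w : List Bool) : Prop :=
  east w = r ∧ north w = s ∧ ∀ p : List Bool, p <+: w → r * north p ≤ s * east p

def powWord (w : List Bool) (d : ℕ) : List Bool := (List.replicate d w).flatten

/-- An essential (primitive) path: not a `d`-fold concatenation of a shorter path, `d ≥ 2`. -/
def Essential (w : List Bool) : Prop :=
  w ≠ [] ∧ ∀ (w₀ : List Bool) (d : ℕ), 2 ≤ d → w ≠ powWord w₀ d

/-- The cyclic-equivalence class (orbit under rotation) of a word. -/
def Orbit (w : List Bool) : Set (List Bool) := {w' | ∃ n : ℕ, w' = w.rotate n}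

/-- `L_{u×v}` is of type `(-1)`: `A n ≤ min(u,v)`, `max(u,v) < A (n+1)` with `n` even, `n > 0`. -/
def TypeNeg (a u v : ℕ) : Prop :=
  ∃ n : ℕ, 1 ≤ n ∧ AN a (2 * n) ≤ min u v ∧ max u v < AN a (2 * n + 1)

/-- `L_{u×v}` is of type `(0)`: `A n ≤ min(u,v) < A (n+1) ≤ max(u,v)` with `n > 0`. -/
def TypeZero (a u v : ℕ) : Prop :=
  ∃ n : ℕ, 1 ≤ n ∧ AN a n ≤ min u v ∧ min u v < AN a (n + 1) ∧ AN a (n + 1) ≤ max u v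

/-- `sub` occurs in `D` as a framed subpath (endpoints are 21-corners of `D`). -/
def FramedOcc (D sub : List Bool) : Prop :=
  ∃ pre post : List Bool, D = pre ++ sub ++ post ∧
    (pre = [] ∨ ∃ p, pre = p ++ [true]) ∧ (post = [] ∨ ∃ q, post = false :: q)

def HasFramedZero (a : ℕ) (D : List Bool) : Prop :=
  ∃ u v : ℕ, TypeZero a u v ∧ FramedOcc D (L u v)

def HasFramedNeg (a : ℕ) (D : List Bool) : Prop :=
  ∃ u v : ℕ, TypeNeg a u v ∧ FramedOcc D (L u v)

/-- The number of framed subpaths of type `(-1)` of `D` (occurrences indexed by the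
prefix before them together with the size `(u,v)`). -/
noncomputable def negCount (a : ℕ) (D : List Bool) : ℕ :=
  Set.ncard {x : List Bool × ℕ × ℕ | TypeNeg a x.2.1 x.2.2 ∧
    ∃ post : List Bool, D = x.1 ++ L x.2.1 x.2.2 ++ post ∧
      (x.1 = [] ∨ ∃ p, x.1 = p ++ [true]) ∧ (post = [] ∨ ∃ q, post = false :: q)}

/-- The elementary blocks used in concatenations: `(i, false)` is `L_{A(i+1)×A i}`,
`(i, true)` is `L_{A i×A(i+1)}`. -/
def block (a : ℕ) : ℕ × Bool → List Bool
  | (i, false) => L (AN a (i + 1)) (AN a i)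
  | (i, true) => L (AN a i) (AN a (i + 1))

/-- The sign of a concatenation: `(-1)^(number of blocks with odd index)`. -/
def sgnC (s : List (ℕ × Bool)) : ℤ := (-1) ^ (s.filter (fun x => x.1 % 2 == 1)).length

/-- The set `S(D)` of concatenations of elementary blocks realizing `D`. -/
def SDyck (a : ℕ) (D : List Bool) : Set (List (ℕ × Bool)) :=
  {s | (s.map (block a)).flatten = D}

/-- The contribution multiplicity `c(D) = Σ_{s ∈ S(D)} sgn(s)`. -/
noncomputable def cMult (a : ℕ) (D : List Bool) : ℤ := ∑ᶠ s ∈ SDyck a D, sgnC s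

-- The contribution multiplicity of an equivalence class, computed on a Dyck-word
-- representative (it is independent of the choice).
open Classical in
noncomputable def cClass (a : ℕ) (C : Set (List Bool)) : ℤ :=
  if h : ∃ w, w ∈ C ∧ IsDyckWord w then cMult a h.choose else 0


lemma AN_le_succ (a : ℕ) (ha : 3 ≤ a) : ∀ n, AN a n ≤ AN a (n + 1) := by
  intro n
  induction n with
  | zero => simp [AN]
  | succ n ih =>
    show AN a (n+1) ≤ AN a (n+2)
    have h3 : 3 * AN a (n+1) ≤ a * AN a (n+1) := Nat.mul_le_mul_right _ ha
    show AN a (n+1) ≤ a * AN a (n+1) + 1 - AN a n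
    omega

lemma AN_lt_succ (a : ℕ) (ha : 3 ≤ a) : ∀ n, AN a n < AN a (n + 1) := by
  intro n
  cases n with
  | zero => simp [AN]
  | succ n =>
    have h3 : 3 * AN a (n+1) ≤ a * AN a (n+1) := Nat.mul_le_mul_right _ ha
    have hle := AN_le_succ a ha n
    show AN a (n+1) < a * AN a (n+1) + 1 - AN a n
    omega

lemma AN_ge (a : ℕ) (ha : 3 ≤ a) : ∀ n, n ≤ AN a n := by
  intro n
  induction n with
  | zero => simp
  | succ n ih => have := AN_lt_succ a ha n; omega

lemma block_length_ge (a : ℕ) (ha : 3 ≤ a) (x : ℕ × Bool) :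
    x.1 + 1 ≤ (block a x).length := by
  obtain ⟨i, b⟩ := x
  have h1 : i + 1 ≤ AN a (i + 1) := AN_ge a ha (i + 1)
  cases b <;> simp [block, L] <;> omega

lemma block_ne_nil (a : ℕ) (ha : 3 ≤ a) (x : ℕ × Bool) : block a x ≠ [] := by
  have := block_length_ge a ha x
  intro h; rw [h] at this; simp at this

lemma flatten_eq_nil (a : ℕ) (ha : 3 ≤ a) (s : List (ℕ × Bool))
    (h : (s.map (block a)).flatten = []) : s = [] := by
  cases s with
  | nil => rfl
  | cons b t =>
    rw [List.map_cons, List.flatten_cons, List.append_eq_nil_iff] at h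
    exact absurd h.1 (block_ne_nil a ha b)

lemma L_sorted (u v : ℕ) : (L u v).Pairwise (· ≤ ·) := by
  rw [L, List.pairwise_append]
  refine ⟨?_, ?_, ?_⟩
  · rw [List.pairwise_replicate]; right; exact le_refl _
  · rw [List.pairwise_replicate]; right; exact le_refl _
  · intro x hx y hy
    rw [List.eq_of_mem_replicate hx, List.eq_of_mem_replicate hy]
    exact Bool.false_le _

lemma L_not_tf (u v : ℕ) (p q : List Bool) : L u v ≠ p ++ true :: false :: q := by
  intro h
  have hs : (p ++ true :: false :: q).Pairwise (· ≤ ·) := h ▸ L_sorted u v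
  have hsub : (true :: false :: q).Sublist (p ++ true :: false :: q) :=
    List.sublist_append_right _ _
  have := (List.pairwise_cons.mp (hs.sublist hsub)).1 false (by simp)
  exact absurd this (by decide)

lemma block_not_tf (a : ℕ) (x : ℕ × Bool) (p q : List Bool) :
    block a x ≠ p ++ true :: false :: q := by
  obtain ⟨i, b⟩ := x; cases b <;> exact L_not_tf _ _ p q

/-- Splitting existence: any realization of `X ++ Y` with `X` ending north and
`Y` starting east splits at the junction. -/
lemma split_ex (a : ℕ) : ∀ (s : List (ℕ × Bool)) (X Y : List Bool),
    X.getLast? = some true → Y.head? = some false →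
    (s.map (block a)).flatten = X ++ Y →
    ∃ s₁ s₂, s = s₁ ++ s₂ ∧ (s₁.map (block a)).flatten = X ∧
      (s₂.map (block a)).flatten = Y := by
  intro s
  induction s with
  | nil =>
    intro X Y hX hY h
    simp only [List.map_nil, List.flatten_nil] at h
    obtain ⟨hX0, hY0⟩ := (List.append_eq_nil_iff).mp h.symm
    rw [hY0] at hY; simp at hY
  | cons b t ih =>
    intro X Y hX hY h
    rw [List.map_cons, List.flatten_cons] at h
    rcases List.append_eq_append_iff.mp h with ⟨w, hw1, hw2⟩ | ⟨w, hw1, hw2⟩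
    · -- X = block a b ++ w, flatten t = w ++ Y
      rcases eq_or_ne w [] with rfl | hne
      · refine ⟨[b], t, rfl, ?_, ?_⟩
        · simp [hw1]
        · simpa using hw2
      · have hwlast : w.getLast? = some true := by
          rw [hw1, List.getLast?_append_of_ne_nil _ hne] at hX; exact hX
        obtain ⟨t₁, t₂, rfl, h1, h2⟩ := ih w Y hwlast hY hw2
        exact ⟨b :: t₁, t₂, rfl, by simp [hw1, h1], h2⟩
    · -- block a b = X ++ w, Y = w ++ flatten t
      rcases eq_or_ne w [] with rfl | hne
      · refine ⟨[b], t, rfl, by simp [hw1], ?_⟩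
        simpa using hw2.symm
      · exfalso
        obtain ⟨X', rfl⟩ := List.getLast?_eq_some_iff.mp hX
        obtain ⟨c, w', rfl⟩ : ∃ c w', w = c :: w' := by
          cases w with
          | nil => exact absurd rfl hne
          | cons c w' => exact ⟨c, w', rfl⟩
        have hc : c = false := by
          rw [hw2] at hY; simpa using hY
        subst hc
        rw [List.append_assoc] at hw1
        exact block_not_tf a b X' w' (by simpa using hw1)

lemma finite_lists {β : Type*} (E : Set β) (hE : E.Finite) :
    ∀ n : ℕ, {l : List β | l.length ≤ n ∧ ∀ x ∈ l, x ∈ E}.Finite := by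
  intro n
  induction n with
  | zero =>
    refine Set.Finite.subset (Set.finite_singleton ([] : List β)) ?_
    rintro l ⟨hl, -⟩
    simpa using List.length_eq_zero_iff.mp (Nat.le_zero.mp hl)
  | succ n ih =>
    refine Set.Finite.subset ((Set.finite_singleton ([] : List β)).union
      (hE.image2 (· :: ·) ih)) ?_
    rintro l ⟨hl, hm⟩
    cases l with
    | nil => exact Or.inl rfl
    | cons b t =>
      refine Or.inr (Set.mem_image2.mpr ⟨b, hm b (by simp), t,
        ⟨by simpa using hl, fun x hx => hm x (by simp [hx])⟩, rfl⟩)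

lemma SDyck_finite (a : ℕ) (ha : 3 ≤ a) (D : List Bool) : (SDyck a D).Finite := by
  have hE : ({x : ℕ × Bool | x.1 ≤ D.length}).Finite := by
    have : {x : ℕ × Bool | x.1 ≤ D.length} = (Set.Iic D.length) ×ˢ (Set.univ) := by
      ext x; simp [Set.mem_prod]
    rw [this]
    exact (Set.finite_Iic _).prod (Set.finite_univ)
  refine Set.Finite.subset (finite_lists _ hE D.length) ?_
  intro s hs
  have hflat : (s.map (block a)).flatten = D := hs
  constructor
  · -- length bound
    have : ∀ t : List (ℕ × Bool), t.length ≤ ((t.map (block a)).flatten).length := by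
      intro t
      induction t with
      | nil => simp
      | cons b u ihu =>
        rw [List.map_cons, List.flatten_cons, List.length_append, List.length_cons]
        have := block_length_ge a ha b
        omega
    calc s.length ≤ ((s.map (block a)).flatten).length := this s
    _ = D.length := by rw [hflat]
  · intro x hx
    have hmem : block a x ∈ s.map (block a) := List.mem_map_of_mem hx
    have hsub : (block a x).Sublist D := hflat ▸ List.sublist_flatten_of_mem hmem
    have := hsub.length_le
    have := block_length_ge a ha x
    show x.1 ≤ D.length
    omega

lemma sgnC_append (s t : List (ℕ × Bool)) : sgnC (s ++ t) = sgnC s * sgnC t := by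
  simp [sgnC, List.filter_append, pow_add]

lemma cMult_eq_sum (a : ℕ) (D : List Bool) (h : (SDyck a D).Finite) :
    cMult a D = ∑ s ∈ h.toFinset, sgnC s := by
  rw [cMult, ← finsum_mem_coe_finset, Set.Finite.coe_toFinset]

theorem stmt10' (a : ℕ) (ha : 3 ≤ a) (D₁ D₂ : List Bool)
    (hend : D₁.getLast? = some true) (hhead : D₂.head? = some false) :
    cMult a (D₁ ++ D₂) = cMult a D₁ * cMult a D₂ := by
  have hf := SDyck_finite a ha (D₁ ++ D₂)
  have hf₁ := SDyck_finite a ha D₁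
  have hf₂ := SDyck_finite a ha D₂
  rw [cMult_eq_sum a _ hf, cMult_eq_sum a _ hf₁, cMult_eq_sum a _ hf₂,
    Finset.sum_mul_sum, ← Finset.sum_product']
  refine (Finset.sum_bij (fun p _ => p.1 ++ p.2) ?_ ?_ ?_ ?_).symm
  · rintro ⟨s₁, s₂⟩ hp
    rw [Finset.mem_product, Set.Finite.mem_toFinset, Set.Finite.mem_toFinset] at hp
    rw [Set.Finite.mem_toFinset]
    show ((s₁ ++ s₂).map (block a)).flatten = D₁ ++ D₂
    rw [List.map_append, List.flatten_append, hp.1, hp.2]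
  · rintro ⟨s₁, s₂⟩ hp ⟨t₁, t₂⟩ hq h
    rw [Finset.mem_product, Set.Finite.mem_toFinset, Set.Finite.mem_toFinset] at hp hq
    have hflat1 : (s₁.map (block a)).flatten = D₁ := hp.1
    have hflat1' : (t₁.map (block a)).flatten = D₁ := hq.1
    have h1 : s₁ = t₁ := by
      rcases List.append_eq_append_iff.mp h with ⟨w, hw1, hw2⟩ | ⟨w, hw1, hw2⟩
      · -- t₁ = s₁ ++ w
        have : (s₁.map (block a)).flatten ++ (w.map (block a)).flatten = D₁ := by
          rw [← List.flatten_append, ← List.map_append, ← hw1]; exact hflat1'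
        rw [hflat1] at this
        have hw : (w.map (block a)).flatten = [] := by
          have hl := congrArg List.length this
          rw [List.length_append] at hl
          exact List.eq_nil_of_length_eq_zero (by omega)
        rw [flatten_eq_nil a ha w hw, List.append_nil] at hw1
        exact hw1.symm
      · have : (t₁.map (block a)).flatten ++ (w.map (block a)).flatten = D₁ := by
          rw [← List.flatten_append, ← List.map_append, ← hw1]; exact hflat1
        rw [hflat1'] at this
        have hw : (w.map (block a)).flatten = [] := by
          have hl := congrArg List.length this
          rw [List.length_append] at hl
          exact List.eq_nil_of_length_eq_zero (by omega)
        rw [flatten_eq_nil a ha w hw, List.append_nil] at hw1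
        exact hw1
    subst h1
    have h2 : s₂ = t₂ := List.append_cancel_left h
    rw [h2]
  · intro s hs
    rw [Set.Finite.mem_toFinset] at hs
    obtain ⟨s₁, s₂, rfl, hs1, hs2⟩ := split_ex a s D₁ D₂ hend hhead hs
    refine ⟨(s₁, s₂), ?_, rfl⟩
    rw [Finset.mem_product, Set.Finite.mem_toFinset, Set.Finite.mem_toFinset]
    exact ⟨hs1, hs2⟩
  · rintro ⟨s₁, s₂⟩ hp
    exact (sgnC_append s₁ s₂).symm

/-- If a Dyck path `D` is the concatenation of Dyck paths `D₁`, `D₂` at a 21-corner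
(`D₁` ends with a north step, `D₂` begins with an east step), then
`c(D) = c(D₁) * c(D₂)`. -/
theorem stmt10 (a : ℕ) (ha : 3 ≤ a) (D₁ D₂ : List Bool)
    (h₁ : IsDyckWord D₁) (h₂ : IsDyckWord D₂)
    (hend : D₁.getLast? = some true) (hhead : D₂.head? = some false) :
    cMult a (D₁ ++ D₂) = cMult a D₁ * cMult a D₂ :=
  stmt10' a ha D₁ D₂ hend hhead
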